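/- Let A be a metric Jordan arc and N ≥ 2 an integer. Then A can be divided into N consecutive subarcs of equal diameter; i.e., there exist points 0 = s₀ < s₁ < … < s_N = 1 (under a parametrization A ≅ [0,1]) such that diam A[s₀,s₁] = diam A[s₁,s₂] = … = diam A[s_{N−1},s_N]. -/

import Mathlib

open Metric Set

noncomputable section

abbrev I01 := Set.Icc (0 : ℝ) 1

namespace EqDiam
def z : I01 := ⟨0, by norm_num⟩
lemma z_le (x : I01) : z ≤ x := x.2.1

lemma exists_close_in {δ : ℝ} (a b a' b' p : I01) (hab' : a' ≤ b')
    (hp : p ∈ Set.Icc a b) (h1 : dist a a' ≤ δ) (h2 : dist b b' ≤ δ) :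
    ∃ q ∈ Set.Icc a' b', dist p q ≤ δ := by
  have hδ : 0 ≤ δ := le_trans dist_nonneg h1
  have h1' : |(a:ℝ) - a'| ≤ δ := by rwa [Subtype.dist_eq, Real.dist_eq] at h1
  have h2' : |(b:ℝ) - b'| ≤ δ := by rwa [Subtype.dist_eq, Real.dist_eq] at h2
  have hpa : (a:ℝ) ≤ p := hp.1
  have hpb : (p:ℝ) ≤ b := hp.2
  have hab'' : (a':ℝ) ≤ b' := hab'
  set q0 : ℝ := max (a':ℝ) (min (b':ℝ) p) with hq0
  have hq0mem : q0 ∈ Set.Icc (0:ℝ) 1 := by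
    constructor
    · exact le_trans a'.2.1 (le_max_left _ _)
    · exact max_le a'.2.2 (le_trans (min_le_left _ _) b'.2.2)
  refine ⟨⟨q0, hq0mem⟩, ⟨?_, ?_⟩, ?_⟩
  · show (a':ℝ) ≤ q0
    exact le_max_left _ _
  · show q0 ≤ (b':ℝ)
    exact max_le hab'' (min_le_left _ _)
  · rw [Subtype.dist_eq, Real.dist_eq]
    show |(p:ℝ) - q0| ≤ δ
    have e1 := abs_le.mp h1'
    have e2 := abs_le.mp h2'
    rcases le_total (p:ℝ) b' with hb | hb
    · rcases le_total (a':ℝ) p with ha | ha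
      · have : q0 = (p:ℝ) := by rw [hq0, min_eq_right hb, max_eq_right ha]
        rw [this]; simpa using hδ
      · have : q0 = (a':ℝ) := by rw [hq0, min_eq_right hb, max_eq_left ha]
        rw [this, abs_le]; constructor <;> linarith
    · have : q0 = (b':ℝ) := by rw [hq0, min_eq_left hb, max_eq_right hab'']
      rw [this, abs_le]; constructor <;> linarith

variable {A : Type*} [MetricSpace A] [CompactSpace A] (e : I01 ≃ₜ A)

def D (a b : I01) : ℝ := diam (e '' Set.Icc a b)

lemma D_nonneg (a b : I01) : 0 ≤ D e a b := diam_nonneg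

lemma D_mono {a b a' b' : I01} (h1 : a' ≤ a) (h2 : b ≤ b') : D e a b ≤ D e a' b' :=
  diam_mono (image_mono (Icc_subset_Icc h1 h2)) ((isCompact_univ.isBounded).subset (subset_univ _))

lemma D_self (a : I01) : D e a a = 0 := by
  simp [D, Set.Icc_self]

lemma D_pos {a b : I01} (h : a < b) : 0 < D e a b := by
  have hu : e a ∈ e '' Set.Icc a b := mem_image_of_mem _ ⟨le_refl a, h.le⟩
  have hv : e b ∈ e '' Set.Icc a b := mem_image_of_mem _ ⟨h.le, le_refl b⟩
  have : (0:ℝ) < dist (e a) (e b) := dist_pos.2 fun h' => h.ne (e.injective h')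
  exact lt_of_lt_of_le this (dist_le_diam_of_mem ((isCompact_univ.isBounded).subset (subset_univ _)) hu hv)

lemma D_le_univ (a b : I01) : D e a b ≤ diam (univ : Set A) :=
  diam_mono (subset_univ _) isCompact_univ.isBounded

lemma D_approx {ε : ℝ} (hε : 0 < ε) : ∃ δ > 0, ∀ a b a' b' : I01, a' ≤ b' →
    dist a a' ≤ δ → dist b b' ≤ δ → D e a b ≤ D e a' b' + ε := by
  have huc : UniformContinuous e := CompactSpace.uniformContinuous_of_continuous e.continuous
  obtain ⟨δ, hδ, hd⟩ := Metric.uniformContinuous_iff.mp huc (ε/2) (by linarith)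
  refine ⟨δ/2, by linarith, fun a b a' b' hab' h1 h2 => ?_⟩
  have hbd : Bornology.IsBounded (e '' Set.Icc a' b') :=
    (isCompact_univ.isBounded).subset (subset_univ _)
  apply diam_le_of_forall_dist_le (add_nonneg diam_nonneg hε.le)
  rintro _ ⟨p, hp, rfl⟩ _ ⟨q, hq, rfl⟩
  obtain ⟨p', hp', hpp'⟩ := exists_close_in a b a' b' p hab' hp h1 h2
  obtain ⟨q', hq', hqq'⟩ := exists_close_in a b a' b' q hab' hq h1 h2
  have d1 : dist (e p) (e p') < ε/2 := hd (lt_of_le_of_lt hpp' (by linarith))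
  have d2 : dist (e q') (e q) < ε/2 := hd (lt_of_le_of_lt (dist_comm q q' ▸ hqq') (by linarith))
  have d3 : dist (e p') (e q') ≤ D e a' b' :=
    dist_le_diam_of_mem hbd (mem_image_of_mem _ hp') (mem_image_of_mem _ hq')
  calc dist (e p) (e q) ≤ dist (e p) (e p') + dist (e p') (e q') + dist (e q') (e q) :=
        dist_triangle4 _ _ _ _
    _ ≤ D e a' b' + ε := by linarith

def dd : ℕ → I01 → ℝ
  | 0, x => D e z x
  | n+1, x => sSup ((fun y => min (dd n y) (D e y x)) '' Set.Icc z x)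

lemma dd_nonempty (x : I01) (f : I01 → ℝ) : (f '' Set.Icc z x).Nonempty :=
  ⟨f z, mem_image_of_mem _ ⟨le_refl z, z_le x⟩⟩

lemma dd_le_univ (n : ℕ) (x : I01) : dd e n x ≤ diam (univ : Set A) := by
  induction n generalizing x with
  | zero => exact D_le_univ e z x
  | succ n ih =>
    refine csSup_le (dd_nonempty x _) ?_
    rintro _ ⟨y, hy, rfl⟩
    exact le_trans (min_le_right _ _) (D_le_univ e y x)

lemma dd_bddAbove (n : ℕ) (x : I01) :
    BddAbove ((fun y => min (dd e n y) (D e y x)) '' Set.Icc z x) := by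
  refine ⟨diam (univ : Set A), ?_⟩
  rintro _ ⟨y, hy, rfl⟩
  exact le_trans (min_le_right _ _) (D_le_univ e y x)

lemma dd_nonneg (n : ℕ) (x : I01) : 0 ≤ dd e n x := by
  induction n generalizing x with
  | zero => exact D_nonneg e z x
  | succ n ih =>
    have hmem : min (dd e n x) (D e x x) ∈ (fun y => min (dd e n y) (D e y x)) '' Set.Icc z x :=
      mem_image_of_mem _ ⟨z_le x, le_refl x⟩
    have : (0:ℝ) ≤ min (dd e n x) (D e x x) := le_min (ih x) (D_nonneg e x x)
    exact le_trans this (le_csSup (dd_bddAbove e n x) hmem)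

lemma dd_mono (n : ℕ) {x x' : I01} (h : x ≤ x') : dd e n x ≤ dd e n x' := by
  induction n generalizing x x' with
  | zero => exact D_mono e (le_refl z) h
  | succ n ih =>
    refine csSup_le (dd_nonempty x _) ?_
    rintro _ ⟨y, hy, rfl⟩
    refine le_trans (min_le_min (le_refl _) (D_mono e (le_refl y) h)) ?_
    exact le_csSup (dd_bddAbove e n x') (mem_image_of_mem _ ⟨hy.1, le_trans hy.2 h⟩)

def mn (y x : I01) : I01 :=
  ⟨min (y:ℝ) x, ⟨le_min y.2.1 x.2.1, le_trans (min_le_left _ _) y.2.2⟩⟩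

lemma mn_le_left (y x : I01) : mn y x ≤ y := by
  show min (y:ℝ) x ≤ (y:ℝ); exact min_le_left _ _

lemma mn_le_right (y x : I01) : mn y x ≤ x := by
  show min (y:ℝ) x ≤ (x:ℝ); exact min_le_right _ _

lemma z_le_mn (y x : I01) : z ≤ mn y x := z_le _

lemma dist_mn {y x x' : I01} (hx : x ≤ x') (hy : y ≤ x') : dist y (mn y x) ≤ dist x x' := by
  rw [Subtype.dist_eq, Subtype.dist_eq, Real.dist_eq, Real.dist_eq]
  have hx' : (x:ℝ) ≤ x' := hx
  have hy' : (y:ℝ) ≤ x' := hy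
  rcases le_total (y:ℝ) x with h | h
  · have : ((mn y x : I01) : ℝ) = (y:ℝ) := min_eq_left h
    rw [this]; simpa using abs_nonneg ((x:ℝ) - x')
  · have : ((mn y x : I01) : ℝ) = (x:ℝ) := min_eq_right h
    rw [this, abs_sub_comm (x:ℝ) x', abs_of_nonneg (show (0:ℝ) ≤ (x':ℝ) - x by linarith),
      abs_of_nonneg (show (0:ℝ) ≤ (y:ℝ) - x by linarith)]
    linarith

lemma dd_uc (n : ℕ) {ε : ℝ} (hε : 0 < ε) :
    ∃ δ > 0, ∀ x x' : I01, x ≤ x' → dist x x' ≤ δ → dd e n x' ≤ dd e n x + ε := by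
  induction n with
  | zero =>
    obtain ⟨δ, hδ, hD⟩ := D_approx e hε
    refine ⟨δ, hδ, fun x x' hxx' hd => ?_⟩
    exact hD z x' z x (z_le x) (by simp [hδ.le]) (dist_comm x x' ▸ hd)
  | succ n ih =>
    obtain ⟨δ₁, hδ₁, h1⟩ := ih
    obtain ⟨δ₂, hδ₂, h2⟩ := D_approx e hε
    refine ⟨min δ₁ δ₂, lt_min hδ₁ hδ₂, fun x x' hxx' hd => ?_⟩
    refine csSup_le (dd_nonempty x' _) ?_
    rintro _ ⟨y, hy, rfl⟩
    set y' := mn y x with hy'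
    have hdy : dist y y' ≤ min δ₁ δ₂ := le_trans (dist_mn hxx' hy.2) hd
    have hd1 : dd e n y ≤ dd e n y' + ε :=
      h1 y' y (mn_le_left y x) (dist_comm y y' ▸ le_trans hdy (min_le_left _ _))
    have hd2 : D e y x' ≤ D e y' x + ε :=
      h2 y x' y' x (mn_le_right y x) (le_trans hdy (min_le_right _ _))
        (dist_comm x x' ▸ le_trans hd (min_le_right _ _))
    have : min (dd e n y) (D e y x') ≤ min (dd e n y') (D e y' x) + ε := by
      refine le_trans (min_le_min hd1 hd2) ?_
      rw [min_add_add_right]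
    refine le_trans this (add_le_add_left ?_ ε)
    exact le_csSup (dd_bddAbove e n x) (mem_image_of_mem _ ⟨z_le y', mn_le_right y x⟩)

lemma dd_cont (n : ℕ) : Continuous (dd e n) := by
  rw [Metric.continuous_iff]
  intro b ε hε
  obtain ⟨δ, hδ, h⟩ := dd_uc e n (show (0:ℝ) < ε/2 by linarith)
  refine ⟨δ, hδ, fun a hab => ?_⟩
  rw [Real.dist_eq, abs_lt]
  rcases le_total a b with hle | hle
  · have h1 := dd_mono e n hle
    have h2 := h a b hle (le_of_lt hab)
    constructor <;> linarith
  · have h1 := dd_mono e n hle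
    have h2 := h b a hle (le_of_lt (dist_comm a b ▸ hab))
    constructor <;> linarith

lemma D_contOn (x : I01) : ContinuousOn (fun y => D e y x) (Set.Icc z x) := by
  rw [Metric.continuousOn_iff]
  intro y0 hy0 ε hε
  obtain ⟨δ, hδ, h⟩ := D_approx e (show (0:ℝ) < ε/2 by linarith)
  refine ⟨δ, hδ, fun y hy hyy0 => ?_⟩
  have h1 : D e y x ≤ D e y0 x + ε/2 := h y x y0 x hy0.2 hyy0.le (by simp [hδ.le])
  have h2 : D e y0 x ≤ D e y x + ε/2 :=
    h y0 x y x hy.2 (dist_comm y0 y ▸ hyy0.le) (by simp [hδ.le])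
  rw [Real.dist_eq, abs_lt]
  constructor <;> linarith

lemma dd_pos (n : ℕ) {x : I01} (hx : z < x) : 0 < dd e n x := by
  induction n generalizing x with
  | zero => exact D_pos e hx
  | succ n ih =>
    have hx0 : (0:ℝ) < x := Subtype.coe_lt_coe.mpr hx
    set y : I01 := ⟨(x:ℝ)/2, ⟨by linarith, le_trans (by linarith) x.2.2⟩⟩ with hy
    have hzy : z < y := Subtype.coe_lt_coe.mp (show (0:ℝ) < (x:ℝ)/2 by linarith)
    have hyx : y < x := Subtype.coe_lt_coe.mp (show ((x:ℝ)/2) < x by linarith)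
    have hmin : (0:ℝ) < min (dd e n y) (D e y x) := lt_min (ih hzy) (D_pos e hyx)
    exact lt_of_lt_of_le hmin
      (le_csSup (dd_bddAbove e n x) (mem_image_of_mem _ ⟨hzy.le, hyx.le⟩))
abbrev I01 := Set.Icc (0 : ℝ) 1

def proj (t : ℝ) : I01 := ⟨max 0 (min 1 t), ⟨le_max_left _ _, max_le zero_le_one (min_le_left _ _)⟩⟩

lemma proj_cont : Continuous proj :=
  Continuous.subtype_mk (continuous_const.max (continuous_const.min continuous_id)) _

lemma proj_eq {a b : I01} {t : ℝ} (h1 : (a:ℝ) ≤ t) (h2 : t ≤ (b:ℝ)) : ((proj t : I01) : ℝ) = t := by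
  have : min 1 t = t := min_eq_right (le_trans h2 b.2.2)
  show max 0 (min 1 t) = t
  rw [this, max_eq_right (le_trans a.2.1 h1)]

lemma ivt_I01 (f : I01 → ℝ) (a b : I01) (hab : a ≤ b) (hf : ContinuousOn f (Set.Icc a b))
    (hfa : f a ≤ 0) (hfb : 0 ≤ f b) : ∃ y ∈ Set.Icc a b, f y = 0 := by
  have hmaps : ∀ t ∈ Set.Icc (a:ℝ) (b:ℝ), proj t ∈ Set.Icc a b := by
    intro t ht
    constructor
    · exact Subtype.coe_le_coe.mp (by rw [proj_eq ht.1 ht.2]; exact ht.1)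
    · exact Subtype.coe_le_coe.mp (by rw [proj_eq ht.1 ht.2]; exact ht.2)
  have hF : ContinuousOn (f ∘ proj) (Set.Icc (a:ℝ) (b:ℝ)) :=
    hf.comp proj_cont.continuousOn hmaps
  have hpa : proj (a:ℝ) = a := Subtype.ext (proj_eq (le_refl _) hab)
  have hpb : proj (b:ℝ) = b := Subtype.ext (proj_eq hab (le_refl _))
  have key := intermediate_value_Icc (show (a:ℝ) ≤ (b:ℝ) from hab) hF
  have h0 : (0:ℝ) ∈ Set.Icc ((f ∘ proj) (a:ℝ)) ((f ∘ proj) (b:ℝ)) := by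
    simp only [Function.comp_apply, hpa, hpb]
    exact ⟨hfa, hfb⟩
  obtain ⟨t, ht, ht0⟩ := key h0
  exact ⟨proj t, hmaps t ht, ht0⟩

lemma dd_z (n : ℕ) : dd e n z = 0 := by
  induction n with
  | zero => exact D_self e z
  | succ n ih =>
    have : Set.Icc z z = ({z} : Set I01) := Set.Icc_self z
    show sSup ((fun y => min (dd e n y) (D e y z)) '' Set.Icc z z) = 0
    rw [this, Set.image_singleton, csSup_singleton, ih, D_self e z, min_self]

lemma exists_partition (n : ℕ) (x : I01) :
    ∃ s : ℕ → I01, s 0 = z ∧ s (n+1) = x ∧ (∀ i ≤ n, s i ≤ s (i+1)) ∧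
      ∀ i ≤ n, D e (s i) (s (i+1)) = dd e n x := by
  induction n generalizing x with
  | zero =>
    refine ⟨fun i => if i = 0 then z else x, by simp, by simp, ?_, ?_⟩
    · intro i hi
      interval_cases i
      simpa using z_le x
    · intro i hi
      interval_cases i
      show D e z x = dd e 0 x
      rfl
  | succ n ih =>
    have hcont : ContinuousOn (fun y => dd e n y - D e y x) (Set.Icc z x) :=
      (dd_cont e n).continuousOn.sub (D_contOn e x)
    have hfa : dd e n z - D e z x ≤ 0 := by
      rw [dd_z]; simp [D_nonneg]
    have hfb : 0 ≤ dd e n x - D e x x := by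
      rw [D_self]; simp [dd_nonneg]
    obtain ⟨y, hy, hy0⟩ := ivt_I01 _ z x (z_le x) hcont hfa hfb
    set c := dd e n y with hc
    have hDyx : D e y x = c := by linarith [sub_eq_zero.mp hy0]
    have hval : dd e (n+1) x = c := by
      apply le_antisymm
      · refine csSup_le (dd_nonempty x _) ?_
        rintro _ ⟨w, hw, rfl⟩
        rcases le_total w y with h | h
        · exact le_trans (min_le_left _ _) (dd_mono e n h)
        · exact le_trans (min_le_right _ _) (le_trans (D_mono e h (le_refl x)) hDyx.le)
      · have hmem : c ∈ (fun y => min (dd e n y) (D e y x)) '' Set.Icc z x := by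
          refine ⟨y, hy, ?_⟩
          show min (dd e n y) (D e y x) = c
          rw [hDyx, ← hc, min_self]
        exact le_csSup (dd_bddAbove e n x) hmem
    obtain ⟨s, hs0, hsn, hmono, hdiam⟩ := ih y
    refine ⟨fun i => if i ≤ n+1 then s i else x, by simp [hs0], by simp, ?_, ?_⟩
    · intro i hi
      rcases Nat.lt_or_ge i (n+1) with h | h
      · have h1 : i ≤ n + 1 := h.le
        have h2 : i + 1 ≤ n + 1 := h
        simp only [if_pos h1, if_pos h2]
        exact hmono i (Nat.lt_succ_iff.mp h)
      · have hieq : i = n + 1 := le_antisymm hi h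
        subst hieq
        simp only [if_pos (le_refl (n+1)), if_neg (by omega : ¬ n + 1 + 1 ≤ n + 1)]
        rw [hsn]
        exact hy.2
    · intro i hi
      rcases Nat.lt_or_ge i (n+1) with h | h
      · have h1 : i ≤ n + 1 := h.le
        have h2 : i + 1 ≤ n + 1 := h
        simp only [if_pos h1, if_pos h2]
        rw [hdiam i (Nat.lt_succ_iff.mp h), hval]
      · have hieq : i = n + 1 := le_antisymm hi h
        subst hieq
        simp only [if_pos (le_refl (n+1)), if_neg (by omega : ¬ n + 1 + 1 ≤ n + 1)]
        rw [hsn, hDyx, hval]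

end EqDiam

/-- Any metric Jordan arc `A` can be divided into `N ≥ 2` consecutive subarcs of equal
diameter. -/
theorem exists_equal_diameter_division
    {A : Type*} [MetricSpace A] [CompactSpace A] (e : I01 ≃ₜ A) (N : ℕ) (hN : 2 ≤ N) :
    ∃ s : ℕ → I01, s 0 = ⟨0, by norm_num⟩ ∧ s N = ⟨1, by norm_num⟩ ∧
      (∀ i < N, s i < s (i + 1)) ∧
      (∀ i < N, ∀ j < N,
        diam (e '' Set.Icc (s i) (s (i + 1))) = diam (e '' Set.Icc (s j) (s (j + 1)))) := by

  obtain ⟨n, rfl⟩ : ∃ n, N = n + 1 := ⟨N - 1, by omega⟩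
  set o : I01 := ⟨1, by norm_num⟩ with ho
  obtain ⟨s, hs0, hsn, hmono, hdiam⟩ := EqDiam.exists_partition e n o
  have hzo : EqDiam.z < o := Subtype.coe_lt_coe.mp (by norm_num [EqDiam.z, ho])
  have hpos : 0 < EqDiam.dd e n o := EqDiam.dd_pos e n hzo
  refine ⟨s, hs0, hsn, ?_, ?_⟩
  · intro i hi
    have hle := hmono i (Nat.lt_succ_iff.mp hi)
    refine lt_of_le_of_ne hle fun hEq => ?_
    have hD := hdiam i (Nat.lt_succ_iff.mp hi)
    rw [hEq, EqDiam.D_self] at hD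
    exact absurd hD.symm (ne_of_gt hpos)
  · intro i hi j hj
    have h1 := hdiam i (Nat.lt_succ_iff.mp hi)
    have h2 := hdiam j (Nat.lt_succ_iff.mp hj)
    show EqDiam.D e (s i) (s (i+1)) = EqDiam.D e (s j) (s (j+1))
    rw [h1, h2]
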